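/- Let γ₀ > 0, Q > 0 and define sequences (α_k), (γ_k) by Q α_k² = γ_k (1 + α_k) with α_k > 0 and γ_{k+1} = γ_k - α_k γ_{k+1} (i.e. q = 0). Then for all k ≥ 1, Q/(√γ₀ · k + √Q)² ≤ Π_{i=0}^{k-1} 1/(1+α_i) ≤ 4Q/(√γ₀ · k + 2√Q)², and moreover √γ₀/(√γ₀ k + √Q) ≤ α_k ≤ 2√Q α₀/(√γ₀ k + 2√Q). -/

import Mathlib

open Real

set_option maxHeartbeats 1200000 in
/-- Lemma A.5 (case `q = 0`): bounds on `α_k` and on `∏ 1/(1+α_i)`. -/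
theorem stmt_15 (γ₀ Q : ℝ) (hγ₀ : 0 < γ₀) (hQ : 0 < Q)
    (α γ : ℕ → ℝ)
    (hαpos : ∀ k, 0 < α k)
    (hroot : ∀ k, Q * (α k) ^ 2 = γ k * (1 + α k))
    (h0 : γ 0 = γ₀)
    (hrec : ∀ k, γ (k + 1) = γ k / (1 + α k)) :
    (∀ k : ℕ, 1 ≤ k →
      Q / (Real.sqrt γ₀ * k + Real.sqrt Q) ^ 2
        ≤ ∏ i ∈ Finset.range k, 1 / (1 + α i) ∧
      (∏ i ∈ Finset.range k, 1 / (1 + α i))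
        ≤ 4 * Q / (Real.sqrt γ₀ * k + 2 * Real.sqrt Q) ^ 2) ∧
    (∀ k : ℕ,
      Real.sqrt γ₀ / (Real.sqrt γ₀ * k + Real.sqrt Q) ≤ α k ∧
      α k ≤ 2 * Real.sqrt Q * α 0 / (Real.sqrt γ₀ * k + 2 * Real.sqrt Q)) := by
  set g := Real.sqrt γ₀ with hgdef
  set q := Real.sqrt Q with hqdef
  set s : ℕ → ℝ := fun k => Real.sqrt (γ k) with hsdef
  have hgpos : 0 < g := Real.sqrt_pos.mpr hγ₀
  have hqpos : 0 < q := Real.sqrt_pos.mpr hQ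
  have hg2 : g ^ 2 = γ₀ := Real.sq_sqrt hγ₀.le
  have hq2 : q ^ 2 = Q := Real.sq_sqrt hQ.le
  have h1α : ∀ k, (0:ℝ) < 1 + α k := fun k => by linarith [hαpos k]
  have hγpos : ∀ k, 0 < γ k := by
    intro k
    induction k with
    | zero => rw [h0]; exact hγ₀
    | succ n ih => rw [hrec]; exact div_pos ih (h1α n)
  have hspos : ∀ k, 0 < s k := fun k => Real.sqrt_pos.mpr (hγpos k)
  have hs2 : ∀ k, s k ^ 2 = γ k := fun k => Real.sq_sqrt (hγpos k).le
  have hs0 : s 0 = g := by simp [hsdef, hgdef, h0]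
  have hγdec : ∀ k, γ (k + 1) ≤ γ k := by
    intro k
    rw [hrec]
    exact div_le_self (hγpos k).le (by linarith [hαpos k])
  have hdec : ∀ k, s (k + 1) ≤ s k := fun k => Real.sqrt_le_sqrt (hγdec k)
  have hγle : ∀ k, γ k ≤ γ₀ := by
    intro k
    induction k with
    | zero => rw [h0]
    | succ n ih => exact (hγdec n).trans ih
  -- key identity: q * α k * s (k+1) = γ k
  have hkey : ∀ k, q * α k * s (k + 1) = γ k := by
    intro k
    have hne := (h1α k).ne'
    have h1 : (q * α k * s (k + 1)) ^ 2 = (γ k) ^ 2 := by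
      have hr := hroot k
      have hrr := hrec k
      rw [mul_pow, mul_pow, hq2, hs2, hrr, hr]
      field_simp [hne]
    have h2 : 0 ≤ q * α k * s (k + 1) :=
      mul_nonneg (mul_nonneg hqpos.le (hαpos k).le) (hspos (k + 1)).le
    calc q * α k * s (k + 1) = Real.sqrt ((q * α k * s (k + 1)) ^ 2) :=
          (Real.sqrt_sq h2).symm
      _ = Real.sqrt ((γ k) ^ 2) := by rw [h1]
      _ = γ k := Real.sqrt_sq (hγpos k).le
  -- step identity: q * (s k ^ 2 - s (k+1) ^ 2) = s (k+1) * s k ^ 2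
  have hS : ∀ k, q * (s k ^ 2 - s (k + 1) ^ 2) = s (k + 1) * s k ^ 2 := by
    intro k
    have hmul : γ (k + 1) * (1 + α k) = γ k := by
      rw [hrec]
      exact div_mul_cancel₀ (γ k) (h1α k).ne'
    have h1 : γ k - γ (k + 1) = γ (k + 1) * α k := by linear_combination -hmul
    rw [hs2 k, hs2 (k + 1), h1]
    linear_combination s (k + 1) * hkey k - q * α k * hs2 (k + 1)
  -- step inequalities
  have hstep1 : ∀ k, q * (s k - s (k + 1)) ≤ s k * s (k + 1) := by
    intro k
    nlinarith [hS k, hspos k, hspos (k + 1), hdec k,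
      mul_nonneg (mul_nonneg (hspos k).le (hspos (k + 1)).le) (hspos (k + 1)).le]
  have hstep2 : ∀ k, s k * s (k + 1) ≤ 2 * q * (s k - s (k + 1)) := by
    intro k
    nlinarith [hS k, hspos k, hspos (k + 1), hdec k, hqpos,
      mul_nonneg (mul_nonneg hqpos.le (sub_nonneg.mpr (hdec k))) (sub_nonneg.mpr (hdec k))]
  -- main bounds
  have LB : ∀ k : ℕ, g * q ≤ s k * (g * k + q) := by
    intro k
    induction k with
    | zero => simp [hs0]
    | succ n ih =>
      have h1 : g * q * s (n + 1) ≤ s n * (g * n + q) * s (n + 1) :=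
        mul_le_mul_of_nonneg_right ih (hspos (n + 1)).le
      have h2 : g * (q * (s n - s (n + 1))) ≤ g * (s n * s (n + 1)) :=
        mul_le_mul_of_nonneg_left (hstep1 n) hgpos.le
      have h3 : g * q * s n ≤ s (n + 1) * (g * (n + 1) + q) * s n := by
        push_cast
        nlinarith [h1, h2]
      have := le_of_mul_le_mul_right h3 (hspos n)
      push_cast at this ⊢
      linarith
  have UB : ∀ k : ℕ, s k * (g * k + 2 * q) ≤ 2 * g * q := by
    intro k
    induction k with
    | zero => simp [hs0]; linarith
    | succ n ih =>
      have h1 : s n * (g * n + 2 * q) * s (n + 1) ≤ 2 * g * q * s (n + 1) :=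
        mul_le_mul_of_nonneg_right ih (hspos (n + 1)).le
      have h2 : g * (s n * s (n + 1)) ≤ g * (2 * q * (s n - s (n + 1))) :=
        mul_le_mul_of_nonneg_left (hstep2 n) hgpos.le
      have h3 : s (n + 1) * (g * (n + 1) + 2 * q) * s n ≤ 2 * g * q * s n := by
        push_cast
        nlinarith [h1, h2]
      have := le_of_mul_le_mul_right h3 (hspos n)
      push_cast at this ⊢
      linarith
  -- product formula
  have hprod : ∀ k, (∏ i ∈ Finset.range k, 1 / (1 + α i)) = γ k / γ₀ := by
    intro k
    induction k with
    | zero => simp [h0, div_self hγ₀.ne']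
    | succ n ih =>
      rw [Finset.prod_range_succ, ih, hrec]
      field_simp
  -- α k ≤ α 0
  have hα0 : ∀ k, α k ≤ α 0 := by
    intro k
    have hr := hroot k
    have hr0 := hroot 0
    rw [h0] at hr0
    have h1 : γ k * (1 + α k) ≤ γ₀ * (1 + α k) :=
      mul_le_mul_of_nonneg_right (hγle k) (h1α k).le
    have h2 : Q * α k ^ 2 * (1 + α 0) ≤ Q * α 0 ^ 2 * (1 + α k) := by
      calc Q * α k ^ 2 * (1 + α 0) = γ k * (1 + α k) * (1 + α 0) := by rw [hr]
        _ ≤ γ₀ * (1 + α k) * (1 + α 0) :=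
            mul_le_mul_of_nonneg_right h1 (h1α 0).le
        _ = Q * α 0 ^ 2 * (1 + α k) := by linear_combination (-(1 + α k)) * hr0
    nlinarith [h2, hαpos k, hαpos 0, hQ,
      mul_pos (mul_pos hQ (hαpos k)) (hαpos 0)]
  constructor
  · intro k _
    have dpos : (0:ℝ) < g * k + q := by positivity
    have d2pos : (0:ℝ) < g * k + 2 * q := by positivity
    rw [hprod k]
    constructor
    · rw [div_le_div_iff₀ (by positivity) hγ₀]
      have h1 := mul_le_mul (LB k) (LB k) (by positivity) (by positivity)
      nlinarith [hs2 k, hg2, hq2, h1]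
    · rw [div_le_div_iff₀ hγ₀ (by positivity)]
      have h1 := mul_le_mul (UB k) (UB k)
        (mul_nonneg (hspos k).le d2pos.le) (by positivity)
      nlinarith [hs2 k, hg2, hq2, h1]
  · intro k
    have dpos : (0:ℝ) < g * k + q := by positivity
    have d2pos : (0:ℝ) < g * k + 2 * q := by positivity
    constructor
    · rw [div_le_iff₀ dpos]
      have hαq : s k ≤ q * α k := by
        nlinarith [hkey k, hdec k, hspos k, hspos (k + 1), hs2 k,
          mul_nonneg (mul_nonneg hqpos.le (hαpos k).le) (sub_nonneg.mpr (hdec k))]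
      have h1 : s k * (g * k + q) ≤ q * α k * (g * k + q) :=
        mul_le_mul_of_nonneg_right hαq dpos.le
      have h2 : g * q ≤ q * (α k * (g * k + q)) := by nlinarith [LB k]
      have h3 : q * g ≤ q * (α k * (g * k + q)) := by linarith
      exact le_of_mul_le_mul_left h3 hqpos
    · rw [le_div_iff₀ d2pos]
      have hsq : (α k * g) ^ 2 ≤ (α 0 * s k) ^ 2 := by
        have hr := hroot k
        have hr0 := hroot 0
        rw [h0] at hr0
        have e1 : Q * (α k * g) ^ 2 = γ k * (1 + α k) * γ₀ := by
          linear_combination g ^ 2 * hr + γ k * (1 + α k) * hg2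
        have e2 : Q * (α 0 * s k) ^ 2 = γ₀ * (1 + α 0) * γ k := by
          linear_combination (s k) ^ 2 * hr0 + γ₀ * (1 + α 0) * hs2 k
        have e3 : Q * (α k * g) ^ 2 ≤ Q * (α 0 * s k) ^ 2 := by
          rw [e1, e2]
          nlinarith [mul_nonneg (mul_nonneg (hγpos k).le hγ₀.le)
            (sub_nonneg.mpr (hα0 k))]
        exact le_of_mul_le_mul_left e3 hQ
      have hcmp : α k * g ≤ α 0 * s k := by
        nlinarith [hsq, mul_pos (hαpos 0) (hspos k), mul_pos (hαpos k) hgpos]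
      have h1 : α k * g * (g * k + 2 * q) ≤ α 0 * s k * (g * k + 2 * q) :=
        mul_le_mul_of_nonneg_right hcmp d2pos.le
      have h2 : α 0 * (s k * (g * k + 2 * q)) ≤ α 0 * (2 * g * q) :=
        mul_le_mul_of_nonneg_left (UB k) (hαpos 0).le
      have h3 : g * (α k * (g * k + 2 * q)) ≤ g * (2 * q * α 0) := by nlinarith [h1, h2]
      exact le_of_mul_le_mul_left h3 hgpos
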